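/- Let F be the global map of ECA rule 184, let p ∈ [0,1], and let P_n(00) = μ_p((F^[n])⁻¹([00])) be the probability of the word 00 after n iterations starting from the Bernoulli measure μ_p. Then lim_{n→∞} P_n(00) = 1 − 2p if p < 1/2, and lim_{n→∞} P_n(00) = 0 if p ≥ 1/2. -/

import Mathlib

open MeasureTheory Filter

/-- The cylinder set generated by the binary word `b` (anchored at `0`). -/
def cylinder (b : List Bool) : Set (ℤ → Bool) :=
  {x | ∀ j : Fin b.length, x (j.val : ℤ) = b.get j}

/-- The global map of the elementary cellular automaton with local rule `f`. -/
def eca (f : Bool → Bool → Bool → Bool) (x : ℤ → Bool) : ℤ → Bool :=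
  fun i => f (x (i - 1)) (x i) (x (i + 1))

/-- The local rule of ECA rule 184: `f(x1,x2,x3) = x1` if `x2 = 0`, and `x3` if `x2 = 1`. -/
def rule184 (x1 x2 x3 : Bool) : Bool := if x2 then x3 else x1

/-- `μ` is the Bernoulli (i.i.d. product) measure with parameter `p`. -/
def IsBernoulli (p : ℝ) (μ : Measure (ℤ → Bool)) : Prop :=
  ∀ (s : Finset ℤ) (f : ℤ → Bool),
    μ {x | ∀ i ∈ s, x i = f i} =
      ∏ i ∈ s, (if f i then ENNReal.ofReal p else ENNReal.ofReal (1 - p))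

namespace R184


/-- step: `+1` for `0`(=false), `-1` for `1`(=true). -/
def eps (b : Bool) : ℤ := if b then -1 else 1

lemma eps_cases (b : Bool) : eps b = 1 ∨ eps b = -1 := by cases b <;> simp [eps]

/-- height function of a configuration, anchored at `0`. -/
noncomputable def hgt (x : ℤ → Bool) (k : ℤ) : ℤ :=
  if 0 ≤ k then ∑ t ∈ Finset.Ioc 0 k, eps (x t) else -∑ t ∈ Finset.Ioc k 0, eps (x t)

lemma Ioc_succ_sum (x : ℤ → Bool) (a k : ℤ) (h : a ≤ k - 1) :
    ∑ t ∈ Finset.Ioc a k, eps (x t) = (∑ t ∈ Finset.Ioc a (k-1), eps (x t)) + eps (x k) := by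
  have h2 : (k : ℤ) - 1 ≤ k := by omega
  have hdis : Disjoint (Finset.Ioc a (k-1)) (Finset.Ioc (k-1) k) := by
    rw [Finset.disjoint_left]; intro t ht ht'
    simp only [Finset.mem_Ioc] at ht ht'; omega
  rw [← Finset.Ioc_union_Ioc_eq_Ioc h h2, Finset.sum_union hdis]
  congr 1
  have : Finset.Ioc (k-1) k = {k} := by
    ext t; simp only [Finset.mem_Ioc, Finset.mem_singleton]; omega
  rw [this, Finset.sum_singleton]

lemma hgt_sub (x : ℤ → Bool) (k : ℤ) : hgt x k - hgt x (k-1) = eps (x k) := by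
  rcases le_or_gt 1 k with h | h
  · have h0 : (0:ℤ) ≤ k := by omega
    have h1 : (0:ℤ) ≤ k - 1 := by omega
    rw [hgt, hgt, if_pos h0, if_pos h1, Ioc_succ_sum x 0 k h1]
    ring
  · rcases le_or_gt k 0 with h2 | h2
    swap
    · omega
    rcases eq_or_lt_of_le h2 with rfl | h3
    · have h6 : Finset.Ioc (-1 : ℤ) 0 = {(0:ℤ)} := by
        ext t; simp only [Finset.mem_Ioc, Finset.mem_singleton]; omega
      simp [hgt, h6]
    · have h4 : ¬ (0:ℤ) ≤ k := by omega
      have h5 : ¬ (0:ℤ) ≤ k - 1 := by omega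
      rw [hgt, hgt, if_neg h4, if_neg h5]
      have key : ∑ t ∈ Finset.Ioc (k-1) 0, eps (x t)
          = eps (x k) + ∑ t ∈ Finset.Ioc k 0, eps (x t) := by
        have ha : (k:ℤ) - 1 ≤ k := by omega
        have hb : (k:ℤ) ≤ 0 := by omega
        have hdis : Disjoint (Finset.Ioc (k-1) k) (Finset.Ioc k 0) := by
          rw [Finset.disjoint_left]; intro t ht ht'
          simp only [Finset.mem_Ioc] at ht ht'; omega
        rw [← Finset.Ioc_union_Ioc_eq_Ioc ha hb, Finset.sum_union hdis]
        have : Finset.Ioc (k-1) k = {k} := by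
          ext t; simp only [Finset.mem_Ioc, Finset.mem_singleton]; omega
        rw [this, Finset.sum_singleton]
      rw [key]; ring

/-- iterated-min function. -/
noncomputable def Mmin (x : ℤ → Bool) : ℕ → ℤ → ℤ
  | 0, k => hgt x k
  | n+1, k => min (Mmin x n (k-1)) (Mmin x n (k+1))

lemma loc (g : ℤ → ℤ) (y : ℤ → Bool) (k : ℤ)
    (h1 : g (k-1) - g (k-1-1) = eps (y (k-1)))
    (h2 : g k - g (k-1) = eps (y k))
    (h3 : g (k+1) - g (k+1-1) = eps (y (k+1))) :
    min (g (k-1)) (g (k+1)) - min (g (k-1-1)) (g (k-1+1)) = eps (eca rule184 y k) := by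
  have hk : eca rule184 y k = rule184 (y (k-1)) (y k) (y (k+1)) := rfl
  have e : k - 1 + 1 = k := by ring
  have e2 : k + 1 - 1 = k := by ring
  rw [e2] at h3
  rw [hk, e]
  rcases Bool.dichotomy (y (k-1)) with ha | ha <;>
  rcases Bool.dichotomy (y k) with hb | hb <;>
  rcases Bool.dichotomy (y (k+1)) with hc | hc <;>
    simp only [ha, hb, hc, eps, rule184, if_true, if_false, Bool.false_eq_true] at * <;> omega

lemma dyn (x : ℤ → Bool) : ∀ (n : ℕ) (k : ℤ),
    Mmin x n k - Mmin x n (k-1) = eps ((eca rule184)^[n] x k) := by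
  intro n
  induction n with
  | zero => intro k; simpa [Mmin] using hgt_sub x k
  | succ n ih =>
    intro k
    have hy := loc (Mmin x n) ((eca rule184)^[n] x) k (ih (k-1)) (ih k) (ih (k+1))
    rw [Function.iterate_succ_apply']
    exact hy

lemma range_nonempty (n : ℕ) : (Finset.range (n+1)).Nonempty := ⟨0, by simp⟩

lemma minform (x : ℤ → Bool) : ∀ (n : ℕ) (k : ℤ),
    Mmin x n k = (Finset.range (n+1)).inf' (range_nonempty n)
      (fun i => hgt x (k - n + 2 * i)) := by
  intro n
  induction n with
  | zero => intro k; simp [Mmin]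
  | succ n ih =>
    intro k
    have e1 : Mmin x (n+1) k = min (Mmin x n (k-1)) (Mmin x n (k+1)) := rfl
    rw [e1, ih (k-1), ih (k+1)]
    set φ : ℕ → ℤ := fun i => hgt x (k - (n+1 : ℕ) + 2 * i) with hφ
    have hf1 : (fun i : ℕ => hgt x (k - 1 - n + 2 * i)) = φ := by
      funext i; simp only [hφ]; congr 1; push_cast; ring
    have hf2 : (fun i : ℕ => hgt x (k + 1 - n + 2 * i)) = fun i => φ (i+1) := by
      funext i; simp only [hφ]; congr 1; push_cast; ring
    rw [hf1, hf2]
    apply le_antisymm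
    · apply Finset.le_inf'
      intro i hi
      simp only [Finset.mem_range] at hi
      rcases Nat.lt_or_ge i (n+1) with h | h
      · exact le_trans inf_le_left
          (Finset.inf'_le φ (by simp only [Finset.mem_range]; omega))
      · have hi2 : i = n + 1 := by omega
        subst hi2
        exact le_trans inf_le_right
          (Finset.inf'_le (fun j => φ (j+1)) (by simp : n ∈ Finset.range (n+1)))
    · apply le_inf
      · apply Finset.le_inf'
        intro i hi
        exact Finset.inf'_le _ (by simp only [Finset.mem_range] at hi ⊢; omega)
      · apply Finset.le_inf'
        intro i hi
        exact Finset.inf'_le _ (by simp only [Finset.mem_range] at hi ⊢; omega)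


def vN {m : ℕ} (v : Fin m → Bool) (i : ℕ) : Bool :=
  if h : i % m < m then v ⟨i % m, h⟩ else false
lemma vN_lt {m : ℕ} (v : Fin m → Bool) {i : ℕ} (h : i < m) : vN v i = v ⟨i, h⟩ := by
  have h2 : i % m = i := Nat.mod_eq_of_lt h
  simp only [vN, h2, dif_pos h]
def fpart {m : ℕ} (v : Fin m → Bool) (u : ℕ) : ℤ :=
  ∑ i ∈ Finset.range u, eps (vN v i)
def Cond {m : ℕ} (v : Fin m → Bool) : Prop := ∀ u ∈ Finset.Icc 1 m, 1 ≤ fpart v u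
instance {m : ℕ} : DecidablePred (Cond (m := m)) := fun v => by
  unfold Cond; infer_instance

section Cycle
variable {m : ℕ}

lemma vN_eq (hm : 0 < m) (v : Fin m → Bool) (j : ℕ) :
    vN v j = v ⟨j % m, Nat.mod_lt j hm⟩ := by
  simp only [vN, dif_pos (Nat.mod_lt j hm)]

lemma fpart_succ (v : Fin m → Bool) (j : ℕ) :
    fpart v (j+1) = fpart v j + eps (vN v j) := by
  simp [fpart, Finset.sum_range_succ]

lemma fpart_zero (v : Fin m → Bool) : fpart v 0 = 0 := by simp [fpart]

lemma vN_period (v : Fin m → Bool) (j : ℕ) : vN v (j + m) = vN v j := by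
  unfold vN
  rw [Nat.add_mod_right]

lemma fpart_period (v : Fin m → Bool) : ∀ j : ℕ, fpart v (j + m) = fpart v j + fpart v m := by
  intro j
  induction j with
  | zero => simp [fpart_zero]
  | succ j ih =>
    have e : j + 1 + m = (j + m) + 1 := by omega
    rw [e, fpart_succ, ih, vN_period, fpart_succ]
    ring

/-- rotation of indices. -/
def sigma (hm : 0 < m) (r : ℕ) : Fin m → Fin m := fun i => ⟨(i.val + r) % m, Nat.mod_lt _ hm⟩

lemma modaux (hm : 0 < m) (r i : ℕ) (hi : i < m) : ((i + (m - r % m)) % m + r) % m = i := by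
  have h1 : r % m < m := Nat.mod_lt _ hm
  have hd := Nat.div_add_mod r m
  have h3 : m * (r / m + 1) = m * (r / m) + m := by ring
  have h2 : i + (m - r % m) + r = i + m * (r / m + 1) := by omega
  rw [Nat.mod_add_mod, h2, Nat.add_mul_mod_self_left, Nat.mod_eq_of_lt hi]

lemma modaux2 (hm : 0 < m) (r i : ℕ) (hi : i < m) : ((i + r) % m + (m - r % m)) % m = i := by
  have h1 : r % m < m := Nat.mod_lt _ hm
  have hd := Nat.div_add_mod r m
  have h3 : m * (r / m + 1) = m * (r / m) + m := by ring
  have h2 : i + r + (m - r % m) = i + m * (r / m + 1) := by omega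
  rw [Nat.mod_add_mod, h2, Nat.add_mul_mod_self_left, Nat.mod_eq_of_lt hi]

lemma sigma_left_inv (hm : 0 < m) (r : ℕ) : ∀ i, sigma hm (m - r % m) (sigma hm r i) = i := by
  intro i
  apply Fin.ext
  simp only [sigma]
  exact modaux2 hm r i.val i.isLt

lemma sigma_right_inv (hm : 0 < m) (r : ℕ) : ∀ i, sigma hm r (sigma hm (m - r % m) i) = i := by
  intro i
  apply Fin.ext
  simp only [sigma]
  exact modaux hm r i.val i.isLt

lemma rot_bijective (hm : 0 < m) (r : ℕ) :
    Function.Bijective (fun v : Fin m → Bool => v ∘ sigma hm r) := by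
  rw [Function.bijective_iff_has_inverse]
  refine ⟨fun w => w ∘ sigma hm (m - r % m), fun v => ?_, fun w => ?_⟩
  · funext i
    simp only [Function.comp_apply]
    rw [sigma_right_inv hm r i]
  · funext i
    simp only [Function.comp_apply]
    rw [sigma_left_inv hm r i]

lemma vN_rot (hm : 0 < m) (v : Fin m → Bool) (r j : ℕ) :
    vN (v ∘ sigma hm r) j = vN v (j + r) := by
  rw [vN_eq hm, vN_eq hm]
  simp only [Function.comp_apply, sigma]
  congr 1
  apply Fin.ext
  simp only
  exact Nat.mod_add_mod _ _ _

lemma fpart_rot (hm : 0 < m) (v : Fin m → Bool) (r u : ℕ) :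
    fpart (v ∘ sigma hm r) u = fpart v (r + u) - fpart v r := by
  unfold fpart
  have h1 : ∀ i ∈ Finset.range u, eps (vN (v ∘ sigma hm r) i) = eps (vN v (r + i)) := by
    intro i _
    rw [vN_rot hm v r i, Nat.add_comm i r]
  rw [Finset.sum_congr rfl h1]
  have h2 : ∑ i ∈ Finset.Ico r (r + u), eps (vN v i)
      = ∑ i ∈ Finset.range ((r+u) - r), eps (vN v (r + i)) :=
    Finset.sum_Ico_eq_sum_range _ _ _
  rw [show (r+u) - r = u by omega] at h2
  rw [← h2, Finset.sum_Ico_eq_sub _ (by omega : r ≤ r + u)]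

/-- `Lrot v r` : the rotation of `v` by `r` satisfies the staying-positive condition. -/
def Lrot {m : ℕ} (v : Fin m → Bool) (r : ℕ) : Prop :=
  ∀ u ∈ Finset.Icc 1 m, 1 ≤ fpart v (r + u) - fpart v r

instance {m : ℕ} (v : Fin m → Bool) : DecidablePred (Lrot v) := fun r => by
  unfold Lrot; infer_instance

lemma cond_rot_iff (hm : 0 < m) (v : Fin m → Bool) (r : ℕ) :
    Cond (v ∘ sigma hm r) ↔ Lrot v r := by
  unfold Cond Lrot
  constructor
  · intro h u hu; rw [← fpart_rot hm]; exact h u hu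
  · intro h u hu; rw [fpart_rot hm]; exact h u hu

/-- the sliding-window minimum of the walk. -/
noncomputable def gmin (hm : 0 < m) (v : Fin m → Bool) (r : ℕ) : ℤ :=
  (Finset.Icc r (r + m)).inf' (Finset.nonempty_Icc.mpr (by omega)) (fpart v)

lemma gmin_succ (hm : 0 < m) (v : Fin m → Bool) (hs : 1 ≤ fpart v m) (r : ℕ) :
    gmin hm v (r+1) = (Finset.Icc (r+1) (r+m)).inf'
      (Finset.nonempty_Icc.mpr (by omega)) (fpart v) := by
  apply le_antisymm
  · apply Finset.le_inf'
    intro j hj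
    simp only [Finset.mem_Icc] at hj
    exact Finset.inf'_le _ (by simp only [Finset.mem_Icc]; omega)
  · apply Finset.le_inf'
    intro j hj
    simp only [Finset.mem_Icc] at hj
    rcases Nat.lt_or_ge j (r+1+m) with h | h
    · exact Finset.inf'_le _ (by simp only [Finset.mem_Icc]; omega)
    · have hj2 : j = r+1+m := by omega
      subst hj2
      have h1 : fpart v (r+1+m) = fpart v (r+1) + fpart v m := by
        rw [show r+1+m = (r+1)+m by omega, fpart_period v]
      have h2 : (Finset.Icc (r+1) (r+m)).inf'
          (Finset.nonempty_Icc.mpr (by omega)) (fpart v) ≤ fpart v (r+1) :=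
        Finset.inf'_le _ (by simp only [Finset.mem_Icc]; omega)
      omega

lemma gmin_eq_min (hm : 0 < m) (v : Fin m → Bool) (r : ℕ) :
    gmin hm v r = min (fpart v r)
      ((Finset.Icc (r+1) (r+m)).inf' (Finset.nonempty_Icc.mpr (by omega)) (fpart v)) := by
  apply le_antisymm
  · apply le_min
    · exact Finset.inf'_le _ (by simp only [Finset.mem_Icc]; omega)
    · apply Finset.le_inf'
      intro j hj
      simp only [Finset.mem_Icc] at hj
      exact Finset.inf'_le _ (by simp only [Finset.mem_Icc]; omega)
  · apply Finset.le_inf'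
    intro j hj
    simp only [Finset.mem_Icc] at hj
    rcases Nat.eq_or_lt_of_le hj.1 with h | h
    · rw [← h]
      exact min_le_left _ _
    · exact le_trans (min_le_right _ _)
        (Finset.inf'_le _ (by simp only [Finset.mem_Icc]; omega))

lemma fpart_step_le (v : Fin m → Bool) (r : ℕ) : fpart v (r+1) ≤ fpart v r + 1 := by
  rw [fpart_succ v]
  rcases eps_cases (vN v r) with h | h <;> omega

lemma gmin_mono (hm : 0 < m) (v : Fin m → Bool) (hs : 1 ≤ fpart v m) (r : ℕ) :
    gmin hm v r ≤ gmin hm v (r+1) ∧ gmin hm v (r+1) ≤ gmin hm v r + 1 := by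
  rw [gmin_succ hm v hs r, gmin_eq_min hm v r]
  have h1 : (Finset.Icc (r+1) (r+m)).inf' (Finset.nonempty_Icc.mpr (by omega)) (fpart v)
      ≤ fpart v (r+1) := Finset.inf'_le _ (by simp only [Finset.mem_Icc]; omega)
  have h2 : fpart v (r+1) ≤ fpart v r + 1 := fpart_step_le v r
  omega

lemma Lrot_iff_gmin (hm : 0 < m) (v : Fin m → Bool) (hs : 1 ≤ fpart v m) (r : ℕ) :
    Lrot v r ↔ gmin hm v (r+1) = gmin hm v r + 1 := by
  have hkey : Lrot v r ↔ fpart v r + 1 ≤ gmin hm v (r+1) := by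
    rw [gmin_succ hm v hs r]
    constructor
    · intro h
      apply Finset.le_inf'
      intro j hj
      simp only [Finset.mem_Icc] at hj
      have := h (j - r) (by simp only [Finset.mem_Icc]; omega)
      rw [show r + (j - r) = j by omega] at this
      omega
    · intro h u hu
      simp only [Finset.mem_Icc] at hu
      have h2 : (Finset.Icc (r+1) (r+m)).inf' (Finset.nonempty_Icc.mpr (by omega)) (fpart v)
          ≤ fpart v (r + u) :=
        Finset.inf'_le _ (by simp only [Finset.mem_Icc]; omega)
      omega
  rw [hkey]
  have hmin := gmin_eq_min hm v r
  rw [← gmin_succ hm v hs r] at hmin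
  have hmono := gmin_mono hm v hs r
  omega

lemma gmin_period (hm : 0 < m) (v : Fin m → Bool) :
    gmin hm v m = gmin hm v 0 + fpart v m := by
  apply le_antisymm
  · obtain ⟨i₀, hi₀, heq⟩ := Finset.exists_mem_eq_inf'
      (Finset.nonempty_Icc.mpr (by omega : (0:ℕ) ≤ 0 + m)) (fpart v)
    simp only [Finset.mem_Icc] at hi₀
    have e0 : gmin hm v 0 = fpart v i₀ := heq
    have h1 : gmin hm v m ≤ fpart v (i₀ + m) :=
      Finset.inf'_le _ (by simp only [Finset.mem_Icc]; omega)
    rw [fpart_period v i₀] at h1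
    omega
  · obtain ⟨j₀, hj₀, heq⟩ := Finset.exists_mem_eq_inf'
      (Finset.nonempty_Icc.mpr (by omega : m ≤ m + m)) (fpart v)
    simp only [Finset.mem_Icc] at hj₀
    have e0 : gmin hm v m = fpart v j₀ := heq
    have h1 : fpart v j₀ = fpart v (j₀ - m) + fpart v m := by
      rw [← fpart_period v, show j₀ - m + m = j₀ by omega]
    have h2 : gmin hm v 0 ≤ fpart v (j₀ - m) :=
      Finset.inf'_le _ (by simp only [Finset.mem_Icc]; omega)
    omega

lemma count_rot (hm : 0 < m) (v : Fin m → Bool) :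
    ∑ r ∈ Finset.range m, (if Lrot v r then (1:ℤ) else 0) = max (fpart v m) 0 := by
  rcases le_or_gt 1 (fpart v m) with hs | hs
  · have hterm : ∀ r ∈ Finset.range m,
        (if Lrot v r then (1:ℤ) else 0) = gmin hm v (r+1) - gmin hm v r := by
      intro r _
      have hmono := gmin_mono hm v hs r
      have hiff := Lrot_iff_gmin hm v hs r
      by_cases h : Lrot v r
      · rw [if_pos h]; rw [hiff] at h; omega
      · rw [if_neg h]; rw [hiff] at h; omega
    rw [Finset.sum_congr rfl hterm, Finset.sum_range_sub (gmin hm v) m, gmin_period hm v]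
    omega
  · have hterm : ∀ r ∈ Finset.range m, (if Lrot v r then (1:ℤ) else 0) = 0 := by
      intro r _
      rw [if_neg]
      intro h
      have h2 := h m (by simp only [Finset.mem_Icc]; omega)
      rw [fpart_period v r] at h2
      omega
    rw [Finset.sum_congr rfl hterm, Finset.sum_const_zero]
    omega

end Cycle

section Sums
variable {m : ℕ} (p : ℝ)

def wt (p : ℝ) (b : Bool) : ℝ := if b then p else 1 - p
def Wr (p : ℝ) {m : ℕ} (v : Fin m → Bool) : ℝ := ∏ i, wt p (v i)
noncomputable def Pm (p : ℝ) (m : ℕ) : ℝ :=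
  ∑ v : Fin m → Bool, if Cond v then Wr p v else 0
def Sv {m : ℕ} (v : Fin m → Bool) : ℤ := ∑ i, eps (v i)

lemma wt_nonneg {p : ℝ} (hp0 : 0 ≤ p) (hp1 : p ≤ 1) (b : Bool) : 0 ≤ wt p b := by
  cases b <;> simp [wt] <;> linarith
lemma Wr_nonneg {p : ℝ} (hp0 : 0 ≤ p) (hp1 : p ≤ 1) {m : ℕ} (v : Fin m → Bool) :
    0 ≤ Wr p v := Finset.prod_nonneg fun i _ => wt_nonneg hp0 hp1 _

lemma Pm_nonneg {p : ℝ} (hp0 : 0 ≤ p) (hp1 : p ≤ 1) (m : ℕ) : 0 ≤ Pm p m := by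
  apply Finset.sum_nonneg
  intro v _
  by_cases h : Cond v
  · rw [if_pos h]; exact Wr_nonneg hp0 hp1 v
  · rw [if_neg h]

lemma fpart_eq_Sv (v : Fin m → Bool) : fpart v m = Sv v := by
  unfold fpart Sv
  rw [← Fin.sum_univ_eq_sum_range (fun i => eps (vN v i)) m]
  apply Finset.sum_congr rfl
  intro i _
  rw [vN_lt _ i.isLt]

lemma Wr_rot (hm : 0 < m) (r : ℕ) (v : Fin m → Bool) :
    Wr p (v ∘ sigma hm r) = Wr p v := by
  unfold Wr
  exact Equiv.prod_comp ⟨sigma hm r, sigma hm (m - r % m),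
    sigma_left_inv hm r, sigma_right_inv hm r⟩ (fun i => wt p (v i))

lemma sum_rot (hm : 0 < m) (r : ℕ) :
    ∑ v : Fin m → Bool, (if Cond (v ∘ sigma hm r) then Wr p v else 0) = Pm p m := by
  have h1 : ∀ v : Fin m → Bool,
      (if Cond (v ∘ sigma hm r) then Wr p v else 0)
        = (if Cond (v ∘ sigma hm r) then Wr p (v ∘ sigma hm r) else 0) := by
    intro v; rw [Wr_rot p hm r v]
  rw [Finset.sum_congr rfl (fun v _ => h1 v)]
  exact Fintype.sum_bijective _ (rot_bijective hm r)
    (fun v => if Cond (v ∘ sigma hm r) then Wr p (v ∘ sigma hm r) else 0)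
    (fun w => if Cond w then Wr p w else 0) (fun v => rfl)

lemma key_identity (hm : 0 < m) :
    (m : ℝ) * Pm p m = ∑ v : Fin m → Bool, Wr p v * ((max (Sv v) 0 : ℤ) : ℝ) := by
  have lhs : (m : ℝ) * Pm p m
      = ∑ r ∈ Finset.range m, ∑ v : Fin m → Bool,
          (if Cond (v ∘ sigma hm r) then Wr p v else 0) := by
    rw [Finset.sum_congr rfl (fun r _ => sum_rot p hm r), Finset.sum_const,
      Finset.card_range, nsmul_eq_mul]
  rw [lhs, Finset.sum_comm]
  apply Finset.sum_congr rfl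
  intro v _
  have h1 : ∀ r ∈ Finset.range m,
      (if Cond (v ∘ sigma hm r) then Wr p v else 0)
        = Wr p v * (if Lrot v r then (1:ℝ) else 0) := by
    intro r _
    by_cases h : Lrot v r
    · rw [if_pos ((cond_rot_iff hm v r).mpr h), if_pos h, mul_one]
    · rw [if_neg (fun hc => h ((cond_rot_iff hm v r).mp hc)), if_neg h, mul_zero]
  rw [Finset.sum_congr rfl h1, ← Finset.mul_sum]
  congr 1
  have h2 : ∑ r ∈ Finset.range m, (if Lrot v r then (1:ℝ) else 0)
      = ((∑ r ∈ Finset.range m, (if Lrot v r then (1:ℤ) else 0) : ℤ) : ℝ) := by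
    push_cast
    apply Finset.sum_congr rfl
    intro r _
    by_cases h : Lrot v r <;> simp [h]
  rw [h2, count_rot hm v, fpart_eq_Sv]

-- splitting sums over function spaces
lemma sum_split (k : ℕ) (F : (Fin (k+1) → Bool) → ℝ) :
    ∑ v : Fin (k+1) → Bool, F v
      = ∑ b : Bool, ∑ w : Fin k → Bool, F (Fin.cons b w) := by
  have h := Fintype.sum_equiv (Fin.consEquiv (fun _ => Bool)).symm F
    (fun bw => F (Fin.cons bw.1 bw.2))
    (fun v => congrArg F (Fin.cons_self_tail v).symm)
  rw [h, Fintype.sum_prod_type]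

lemma Wr_cons (k : ℕ) (b : Bool) (w : Fin k → Bool) :
    Wr p (Fin.cons b w) = wt p b * Wr p w := by
  unfold Wr
  rw [Fin.prod_univ_succ]
  simp [Fin.cons_zero, Fin.cons_succ]

lemma Sv_cons (k : ℕ) (b : Bool) (w : Fin k → Bool) :
    Sv (Fin.cons b w) = eps b + Sv w := by
  unfold Sv
  rw [Fin.sum_univ_succ]
  simp [Fin.cons_zero, Fin.cons_succ]

lemma moment0 : ∀ m : ℕ, ∑ v : Fin m → Bool, Wr p v = 1 := by
  intro m
  induction m with
  | zero => simp [Wr]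
  | succ k ih =>
    rw [sum_split k (Wr p)]
    have h1 : ∀ b : Bool, ∑ w : Fin k → Bool, Wr p (Fin.cons b w) = wt p b := by
      intro b
      rw [Finset.sum_congr rfl (fun w _ => Wr_cons p k b w), ← Finset.mul_sum, ih, mul_one]
    rw [Finset.sum_congr rfl (fun b _ => h1 b)]
    simp [wt]

lemma moment1 : ∀ m : ℕ, ∑ v : Fin m → Bool, Wr p v * ((Sv v : ℤ) : ℝ)
    = m * (1 - 2*p) := by
  intro m
  induction m with
  | zero => simp [Sv]
  | succ k ih =>
    rw [sum_split k (fun v => Wr p v * ((Sv v : ℤ) : ℝ))]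
    have h1 : ∀ b : Bool, ∑ w : Fin k → Bool, Wr p (Fin.cons b w) * ((Sv (Fin.cons b w) : ℤ) : ℝ)
        = wt p b * ((eps b : ℝ) + k * (1 - 2*p)) := by
      intro b
      have h2 : ∀ w : Fin k → Bool,
          Wr p (Fin.cons b w) * ((Sv (Fin.cons b w) : ℤ) : ℝ)
            = wt p b * ((eps b : ℝ) * Wr p w + Wr p w * ((Sv w : ℤ) : ℝ)) := by
        intro w
        rw [Wr_cons p k b w, Sv_cons k b w]
        push_cast
        ring
      rw [Finset.sum_congr rfl (fun w _ => h2 w), ← Finset.mul_sum]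
      congr 1
      rw [Finset.sum_add_distrib, ← Finset.mul_sum, moment0, ih, mul_one]
    rw [Finset.sum_congr rfl (fun b _ => h1 b)]
    simp only [Fintype.sum_bool, wt, eps, if_true, if_false]
    push_cast
    ring

lemma moment2 : ∀ m : ℕ, ∑ v : Fin m → Bool, Wr p v * ((Sv v : ℤ) : ℝ)^2
    = m * (4*p*(1-p)) + (m * (1 - 2*p))^2 := by
  intro m
  induction m with
  | zero => simp [Sv]
  | succ k ih =>
    rw [sum_split k (fun v => Wr p v * ((Sv v : ℤ) : ℝ)^2)]
    have h1 : ∀ b : Bool, ∑ w : Fin k → Bool, Wr p (Fin.cons b w) * ((Sv (Fin.cons b w) : ℤ) : ℝ)^2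
        = wt p b * ((eps b : ℝ)^2 + 2 * (eps b : ℝ) * (k * (1 - 2*p))
            + (k * (4*p*(1-p)) + (k * (1 - 2*p))^2)) := by
      intro b
      have h2 : ∀ w : Fin k → Bool,
          Wr p (Fin.cons b w) * ((Sv (Fin.cons b w) : ℤ) : ℝ)^2
            = wt p b * ((eps b : ℝ)^2 * Wr p w + 2 * (eps b : ℝ) * (Wr p w * ((Sv w : ℤ) : ℝ))
                + Wr p w * ((Sv w : ℤ) : ℝ)^2) := by
        intro w
        rw [Wr_cons p k b w, Sv_cons k b w]
        push_cast
        ring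
      rw [Finset.sum_congr rfl (fun w _ => h2 w), ← Finset.mul_sum]
      congr 1
      rw [Finset.sum_add_distrib, Finset.sum_add_distrib, ← Finset.mul_sum, moment0,
        ← Finset.mul_sum, ih, moment1, mul_one]
    rw [Finset.sum_congr rfl (fun b _ => h1 b)]
    simp only [Fintype.sum_bool, wt, eps, if_true, if_false]
    push_cast
    ring

end Sums

section Bounds
variable {m : ℕ} {p : ℝ}

lemma max_cast (v : Fin m → Bool) :
    ((max (Sv v) 0 : ℤ) : ℝ) = (((Sv v : ℤ):ℝ) + |((Sv v : ℤ):ℝ)|)/2 := by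
  rcases le_total (Sv v) 0 with h | h
  · rw [max_eq_right h]
    have h2 : ((Sv v : ℤ):ℝ) ≤ 0 := by exact_mod_cast h
    rw [abs_of_nonpos h2]
    simp
  · rw [max_eq_left h]
    have h2 : (0:ℝ) ≤ ((Sv v : ℤ):ℝ) := by exact_mod_cast h
    rw [abs_of_nonneg h2]
    push_cast
    ring

lemma absmoment_sq (hp0 : 0 ≤ p) (hp1 : p ≤ 1) (m : ℕ) :
    (∑ v : Fin m → Bool, Wr p v * |((Sv v : ℤ):ℝ)|)^2
      ≤ m * (4*p*(1-p)) + (m * (1 - 2*p))^2 := by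
  have key := Finset.sum_mul_sq_le_sq_mul_sq Finset.univ
    (fun v : Fin m → Bool => Real.sqrt (Wr p v))
    (fun v : Fin m → Bool => Real.sqrt (Wr p v) * |((Sv v : ℤ):ℝ)|)
  have e1 : ∀ v : Fin m → Bool,
      Real.sqrt (Wr p v) * (Real.sqrt (Wr p v) * |((Sv v : ℤ):ℝ)|)
        = Wr p v * |((Sv v : ℤ):ℝ)| := by
    intro v
    rw [← mul_assoc, Real.mul_self_sqrt (Wr_nonneg hp0 hp1 v)]
  have e2 : ∀ v : Fin m → Bool, Real.sqrt (Wr p v) ^ 2 = Wr p v :=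
    fun v => Real.sq_sqrt (Wr_nonneg hp0 hp1 v)
  have e3 : ∀ v : Fin m → Bool,
      (Real.sqrt (Wr p v) * |((Sv v : ℤ):ℝ)|)^2 = Wr p v * ((Sv v : ℤ):ℝ)^2 := by
    intro v
    rw [mul_pow, e2 v, sq_abs]
  rw [Finset.sum_congr rfl (fun v _ => e1 v), Finset.sum_congr rfl (fun v _ => e2 v),
    Finset.sum_congr rfl (fun v _ => e3 v), moment0, one_mul, moment2] at key
  exact key

lemma absmoment_le (hp0 : 0 ≤ p) (hp1 : p ≤ 1) (m : ℕ) :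
    ∑ v : Fin m → Bool, Wr p v * |((Sv v : ℤ):ℝ)|
      ≤ Real.sqrt (m * (4*p*(1-p)) + (m * (1 - 2*p))^2) := by
  have hD : 0 ≤ ∑ v : Fin m → Bool, Wr p v * |((Sv v : ℤ):ℝ)| :=
    Finset.sum_nonneg fun v _ => mul_nonneg (Wr_nonneg hp0 hp1 v) (abs_nonneg _)
  calc ∑ v : Fin m → Bool, Wr p v * |((Sv v : ℤ):ℝ)|
      = Real.sqrt ((∑ v : Fin m → Bool, Wr p v * |((Sv v : ℤ):ℝ)|)^2) :=
        (Real.sqrt_sq hD).symm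
    _ ≤ Real.sqrt (m * (4*p*(1-p)) + (m * (1 - 2*p))^2) :=
        Real.sqrt_le_sqrt (absmoment_sq hp0 hp1 m)

lemma T_formula (hp0 : 0 ≤ p) (hp1 : p ≤ 1) (m : ℕ) :
    ∑ v : Fin m → Bool, Wr p v * ((max (Sv v) 0 : ℤ) : ℝ)
      = (∑ v : Fin m → Bool, Wr p v * ((Sv v : ℤ):ℝ)
          + ∑ v : Fin m → Bool, Wr p v * |((Sv v : ℤ):ℝ)|)/2 := by
  rw [← Finset.sum_add_distrib, Finset.sum_div]
  apply Finset.sum_congr rfl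
  intro v _
  rw [max_cast]
  ring

lemma T_ge (hp0 : 0 ≤ p) (hp1 : p ≤ 1) (m : ℕ) :
    (m : ℝ) * (1 - 2*p) ≤ ∑ v : Fin m → Bool, Wr p v * ((max (Sv v) 0 : ℤ) : ℝ) := by
  rw [← moment1 p m]
  apply Finset.sum_le_sum
  intro v _
  apply mul_le_mul_of_nonneg_left _ (Wr_nonneg hp0 hp1 v)
  exact_mod_cast le_max_left (Sv v) 0

lemma Pm_eq_T_div (hm : 0 < m) :
    Pm p m = (∑ v : Fin m → Bool, Wr p v * ((max (Sv v) 0 : ℤ) : ℝ)) / m := by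
  have hm0 : (m:ℝ) ≠ 0 := by positivity
  rw [eq_div_iff hm0, mul_comm, key_identity p hm]

lemma Pm_bound_sub (hp0 : 0 ≤ p) (hp1 : p ≤ 1) (hm : 0 < m) (hc : 0 < 1 - 2*p) :
    1 - 2*p ≤ Pm p m ∧ Pm p m ≤ (1 - 2*p) + (p*(1-p)/(1-2*p))/m := by
  have hm0 : (0:ℝ) < m := by exact_mod_cast hm
  set c := 1 - 2*p with hcdef
  set T := ∑ v : Fin m → Bool, Wr p v * ((max (Sv v) 0 : ℤ) : ℝ) with hT
  have hTge : (m:ℝ) * c ≤ T := T_ge hp0 hp1 m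
  have hpq : 0 ≤ p * (1-p) := mul_nonneg hp0 (by linarith)
  have hsqrt : Real.sqrt ((m:ℝ) * (4*p*(1-p)) + ((m:ℝ) * c)^2)
      ≤ (m:ℝ)*c + 2*(p*(1-p))/c := by
    rw [Real.sqrt_le_iff]
    constructor
    · have : 0 ≤ 2*(p*(1-p))/c := by positivity
      nlinarith
    · have hc0 : c ≠ 0 := by linarith
      have e : c * (2*(p*(1-p))/c) = 2*(p*(1-p)) := by field_simp
      nlinarith [sq_nonneg (2*(p*(1-p))/c), hm0, hpq]
  have hTle : T ≤ (m:ℝ)*c + p*(1-p)/c := by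
    have h1 := T_formula hp0 hp1 m
    have h2 := absmoment_le hp0 hp1 m
    have h3 := moment1 p m
    rw [← hcdef] at h3 h2
    rw [hT, h1, h3]
    have e2 : 2*(p*(1-p))/c = 2*(p*(1-p)/c) := by ring
    nlinarith [hsqrt]
  rw [Pm_eq_T_div hm, ← hT]
  constructor
  · rw [le_div_iff₀ hm0]
    nlinarith
  · rw [div_le_iff₀ hm0]
    have e : ((c : ℝ) + p*(1-p)/c/m) * m = m*c + p*(1-p)/c := by
      field_simp
    rw [e]
    exact hTle

lemma Pm_bound_crit (hp0 : 0 ≤ p) (hp1 : p ≤ 1) (hm : 0 < m) (hc : 1 - 2*p ≤ 0) :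
    Pm p m ≤ Real.sqrt (p*(1-p)/m) := by
  have hm0 : (0:ℝ) < m := by exact_mod_cast hm
  set c := 1 - 2*p with hcdef
  set T := ∑ v : Fin m → Bool, Wr p v * ((max (Sv v) 0 : ℤ) : ℝ) with hT
  have hpq : 0 ≤ p * (1-p) := mul_nonneg hp0 (by linarith)
  have hsq : Real.sqrt (p*(1-p)/m) ^ 2 = p*(1-p)/m := Real.sq_sqrt (by positivity)
  have hsqrtnn : 0 ≤ Real.sqrt (p*(1-p)/m) := Real.sqrt_nonneg _
  have hsqrtB : Real.sqrt ((m:ℝ) * (4*p*(1-p)) + ((m:ℝ) * c)^2)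
      ≤ -((m:ℝ)*c) + 2*(m:ℝ)*Real.sqrt (p*(1-p)/m) := by
    have hmc : (m:ℝ)*c ≤ 0 := mul_nonpos_of_nonneg_of_nonpos hm0.le hc
    have hb : (2*(m:ℝ)*Real.sqrt (p*(1-p)/m))^2 = 4*(m:ℝ)*(p*(1-p)) := by
      rw [mul_pow, mul_pow, hsq]
      field_simp
      ring
    have hcross : 0 ≤ -((m:ℝ)*c) * (2*(m:ℝ)*Real.sqrt (p*(1-p)/m)) :=
      mul_nonneg (by linarith) (by positivity)
    rw [Real.sqrt_le_iff]
    constructor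
    · nlinarith [mul_nonneg hm0.le hsqrtnn]
    · nlinarith [hb, hcross]
  have hTle : T ≤ (m:ℝ) * Real.sqrt (p*(1-p)/m) := by
    have h1 := T_formula hp0 hp1 m
    have h2 := absmoment_le hp0 hp1 m
    have h3 := moment1 p m
    rw [← hcdef] at h3 h2
    rw [hT, h1, h3]
    nlinarith [hsqrtB]
  rw [Pm_eq_T_div hm, ← hT, div_le_iff₀ hm0]
  linarith [hTle]

lemma tendsto_two_n : Filter.Tendsto (fun n : ℕ => 2*n+2) Filter.atTop Filter.atTop :=
  Filter.tendsto_atTop_atTop.mpr (fun b => ⟨b, fun a ha => by omega⟩)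

lemma Pm_tendsto_sub (hp0 : 0 ≤ p) (hp1 : p ≤ 1) (hp : p < 1/2) :
    Filter.Tendsto (fun n : ℕ => Pm p (2*n+2)) Filter.atTop (nhds (1 - 2*p)) := by
  have hc : 0 < 1 - 2*p := by linarith
  have hup : Filter.Tendsto
      (fun n : ℕ => (1 - 2*p) + (p*(1-p)/(1-2*p))/((2*n+2 : ℕ):ℝ))
      Filter.atTop (nhds (1 - 2*p)) := by
    have h0 : Filter.Tendsto (fun n : ℕ => (p*(1-p)/(1-2*p))/((2*n+2 : ℕ):ℝ))
        Filter.atTop (nhds 0) :=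
      (tendsto_const_div_atTop_nhds_zero_nat (p*(1-p)/(1-2*p))).comp tendsto_two_n
    have := Filter.Tendsto.add (tendsto_const_nhds (x := (1-2*p)) (f := Filter.atTop (α := ℕ))) h0
    simpa using this
  apply tendsto_of_tendsto_of_tendsto_of_le_of_le tendsto_const_nhds hup
  · intro n
    exact (Pm_bound_sub hp0 hp1 (by omega) hc).1
  · intro n
    exact (Pm_bound_sub hp0 hp1 (by omega) hc).2

lemma Pm_tendsto_crit (hp0 : 0 ≤ p) (hp1 : p ≤ 1) (hp : 1/2 ≤ p) :
    Filter.Tendsto (fun n : ℕ => Pm p (2*n+2)) Filter.atTop (nhds 0) := by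
  have hc : 1 - 2*p ≤ 0 := by linarith
  have hup : Filter.Tendsto (fun n : ℕ => Real.sqrt (p*(1-p)/((2*n+2 : ℕ):ℝ)))
      Filter.atTop (nhds 0) := by
    have h0 : Filter.Tendsto (fun n : ℕ => p*(1-p)/((2*n+2 : ℕ):ℝ))
        Filter.atTop (nhds 0) :=
      (tendsto_const_div_atTop_nhds_zero_nat (p*(1-p))).comp tendsto_two_n
    have := h0.sqrt
    rwa [Real.sqrt_zero] at this
  apply tendsto_of_tendsto_of_tendsto_of_le_of_le tendsto_const_nhds hup
  · intro n
    exact Pm_nonneg hp0 hp1 (2*n+2)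
  · intro n
    exact Pm_bound_crit hp0 hp1 (by omega) hc

end Bounds
/-- the relevant walk: partial sums of steps starting at site `-n`. -/
def Sfun (x : ℤ → Bool) (n : ℕ) (u : ℕ) : ℤ :=
  ∑ i ∈ Finset.range u, eps (x (-(n:ℤ) + i))

lemma Sfun_zero (x : ℤ → Bool) (n : ℕ) : Sfun x n 0 = 0 := by simp [Sfun]

lemma Sfun_succ (x : ℤ → Bool) (n u : ℕ) :
    Sfun x n (u+1) = Sfun x n u + eps (x (-(n:ℤ) + u)) := by
  simp [Sfun, Finset.sum_range_succ]

lemma Sfun_le (x : ℤ → Bool) (n : ℕ) : ∀ u : ℕ, Sfun x n u ≤ u := by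
  intro u
  induction u with
  | zero => simp [Sfun_zero]
  | succ u ih =>
    rw [Sfun_succ]
    rcases eps_cases (x (-(n:ℤ) + u)) with h | h <;> rw [h] <;> push_cast <;> omega

lemma Sfun_parity (x : ℤ → Bool) (n : ℕ) : ∀ u : ℕ, ∃ c : ℤ, (u:ℤ) + Sfun x n u = 2 * c := by
  intro u
  induction u with
  | zero => exact ⟨0, by simp [Sfun_zero]⟩
  | succ u ih =>
    obtain ⟨c, hc⟩ := ih
    rw [Sfun_succ]
    rcases eps_cases (x (-(n:ℤ) + u)) with h | h <;> rw [h]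
    · exact ⟨c+1, by push_cast; omega⟩
    · exact ⟨c, by push_cast; omega⟩

lemma Sfun_step_ge (x : ℤ → Bool) (n u : ℕ) : Sfun x n u ≥ Sfun x n (u+1) - 1 := by
  rw [Sfun_succ]
  rcases eps_cases (x (-(n:ℤ) + u)) with h | h <;> rw [h] <;> omega

lemma hval (x : ℤ → Bool) (n : ℕ) : ∀ u : ℕ,
    hgt x (-(n:ℤ)-1 + (u:ℤ)) = hgt x (-(n:ℤ)-1) + Sfun x n u := by
  intro u
  induction u with
  | zero => simp [Sfun_zero]
  | succ u ih =>
    have h := hgt_sub x (-(n:ℤ) + u)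
    have e : -(n:ℤ) + (u:ℤ) - 1 = -(n:ℤ)-1 + (u:ℤ) := by ring
    have e2 : -(n:ℤ)-1 + ((u:ℕ)+1 : ℕ) = -(n:ℤ) + u := by push_cast; ring
    rw [e] at h
    rw [e2, Sfun_succ]
    omega

/-- the even positions are ≥ 2 whenever the walk stays ≥ 1. -/
lemma even_ge2 (x : ℤ → Bool) (n : ℕ)
    (hS : ∀ u ∈ Finset.Icc 1 (2*n+2), 1 ≤ Sfun x n u) :
    ∀ i : ℕ, 1 ≤ i → i ≤ n+1 → 2 ≤ Sfun x n (2*i) := by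
  intro i h1 h2
  have hmem : 2*i ∈ Finset.Icc 1 (2*n+2) := by simp only [Finset.mem_Icc]; omega
  have h3 := hS _ hmem
  obtain ⟨c, hc⟩ := Sfun_parity x n (2*i)
  push_cast at hc
  omega

lemma stay_iff (x : ℤ → Bool) (n : ℕ) :
    Mmin x n 1 - Mmin x n (-1) = 2 ↔
      ∀ u ∈ Finset.Icc 1 (2*n+2), 1 ≤ Sfun x n u := by
  set α := hgt x (-(n:ℤ)-1) with hα
  have hA : (fun i : ℕ => hgt x (1 - (n:ℤ) + 2 * i)) = fun i => α + Sfun x n (2*i+2) := by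
    funext i
    rw [show (1 - (n:ℤ) + 2*i) = -(n:ℤ)-1 + ((2*i+2 : ℕ) : ℤ) by push_cast; ring, hval]
  have hB : (fun i : ℕ => hgt x (-1 - (n:ℤ) + 2 * i)) = fun i => α + Sfun x n (2*i) := by
    funext i
    rw [show (-1 - (n:ℤ) + 2*i) = -(n:ℤ)-1 + ((2*i : ℕ) : ℤ) by push_cast; ring, hval]
  have hM1 : Mmin x n 1 = (Finset.range (n+1)).inf' (range_nonempty n)
      (fun i => α + Sfun x n (2*i+2)) := by rw [minform, hA]
  have hM0 : Mmin x n (-1) = (Finset.range (n+1)).inf' (range_nonempty n)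
      (fun i => α + Sfun x n (2*i)) := by rw [minform, hB]
  constructor
  · -- hard direction
    intro hM u hu
    simp only [Finset.mem_Icc] at hu
    -- Step 1 : Mmin x n (-1) = α
    have h0 : Mmin x n (-1) = α := by
      obtain ⟨i₀, hi₀, heq⟩ := Finset.exists_mem_eq_inf' (range_nonempty n)
        (fun i => α + Sfun x n (2*i))
      rcases Nat.eq_zero_or_pos i₀ with rfl | hpos
      · rw [hM0, heq]; simp [Sfun_zero]
      · exfalso
        have hle : Mmin x n 1 ≤ α + Sfun x n (2*i₀) := by
          rw [hM1]
          have : α + Sfun x n (2*i₀) = α + Sfun x n (2*(i₀-1)+2) := by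
            congr 2; omega
          rw [this]
          exact Finset.inf'_le _ (by simp only [Finset.mem_range] at hi₀ ⊢; omega)
        rw [← hM0] at heq
        omega
    -- Step 2 : even positions
    have heven : ∀ w : ℕ, 1 ≤ w → w ≤ n+1 → 2 ≤ Sfun x n (2*w) := by
      intro w hw1 hw2
      have hle : Mmin x n 1 ≤ α + Sfun x n (2*w) := by
        rw [hM1]
        have : α + Sfun x n (2*w) = α + Sfun x n (2*(w-1)+2) := by congr 2; omega
        rw [this]
        exact Finset.inf'_le _ (by simp only [Finset.mem_range]; omega)
      omega
    rcases Nat.even_or_odd u with ⟨w, hw⟩ | ⟨w, hw⟩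
    · have : 2 ≤ Sfun x n u := by
        have := heven w (by omega) (by omega)
        rwa [show 2*w = u by omega] at this
      omega
    · -- odd
      have h2 : 2 ≤ Sfun x n (u+1) := by
        have := heven (w+1) (by omega) (by omega)
        rwa [show 2*(w+1) = u+1 by omega] at this
      have := Sfun_step_ge x n u
      omega
  · intro hS
    have hS2 : Sfun x n 2 = 2 := by
      have h1 : 2 ≤ Sfun x n 2 := by
        have := even_ge2 x n hS 1 le_rfl (by omega); simpa using this
      have h2 := Sfun_le x n 2
      push_cast at h2
      omega
    have h0 : Mmin x n (-1) = α := by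
      rw [hM0]
      apply le_antisymm
      · have := Finset.inf'_le (fun i : ℕ => α + Sfun x n (2*i))
          (by simp : 0 ∈ Finset.range (n+1))
        simp only [mul_zero, Sfun_zero, add_zero] at this; exact this
      · apply Finset.le_inf'
        intro i hi
        simp only [Finset.mem_range] at hi
        rcases Nat.eq_zero_or_pos i with rfl | hpos
        · simp [Sfun_zero]
        · have := even_ge2 x n hS i hpos (by omega)
          omega
    have h1 : Mmin x n 1 = α + 2 := by
      rw [hM1]
      apply le_antisymm
      · have := Finset.inf'_le (fun i : ℕ => α + Sfun x n (2*i+2))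
          (by simp : 0 ∈ Finset.range (n+1))
        rw [show 2*0+2 = 2 by omega, hS2] at this
        exact this
      · apply Finset.le_inf'
        intro i hi
        simp only [Finset.mem_range] at hi
        have := even_ge2 x n hS (i+1) (by omega) (by omega)
        rw [show 2*(i+1) = 2*i+2 by omega] at this
        omega
    omega

lemma mem_cyl00 (y : ℤ → Bool) :
    y ∈ cylinder [false, false] ↔ (y 0 = false ∧ y 1 = false) := by
  constructor
  · intro h
    exact ⟨h ⟨0, by norm_num⟩, h ⟨1, by norm_num⟩⟩
  · rintro ⟨h0, h1⟩ j
    fin_cases j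
    · exact h0
    · exact h1

lemma eps_eq_one_iff (b : Bool) : eps b = 1 ↔ b = false := by cases b <;> simp [eps]

lemma event_eq (n : ℕ) :
    (eca rule184)^[n] ⁻¹' cylinder [false, false] =
      {x | ∀ u ∈ Finset.Icc 1 (2*n+2), 1 ≤ Sfun x n u} := by
  ext x
  simp only [Set.mem_preimage, Set.mem_setOf_eq, mem_cyl00]
  rw [← stay_iff]
  have d0 := dyn x n 0
  have d1 := dyn x n 1
  rw [show (0:ℤ)-1 = -1 by ring] at d0
  rw [show (1:ℤ)-1 = 0 by ring] at d1
  constructor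
  · rintro ⟨h0, h1⟩
    rw [h0] at d0; rw [h1] at d1
    simp only [eps, if_false, Bool.false_eq_true] at d0 d1
    omega
  · intro h
    have e0 : eps ((eca rule184)^[n] x 0) = 1 := by
      rcases eps_cases ((eca rule184)^[n] x 0) with h' | h' <;>
      rcases eps_cases ((eca rule184)^[n] x 1) with h'' | h'' <;> omega
    have e1 : eps ((eca rule184)^[n] x 1) = 1 := by
      rcases eps_cases ((eca rule184)^[n] x 0) with h' | h' <;>
      rcases eps_cases ((eca rule184)^[n] x 1) with h'' | h'' <;> omega
    exact ⟨(eps_eq_one_iff _).mp e0, (eps_eq_one_iff _).mp e1⟩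

def restr (n : ℕ) (x : ℤ → Bool) : Fin (2*n+2) → Bool := fun i => x (-(n:ℤ) + i)

lemma Sfun_eq_fpart (n : ℕ) (x : ℤ → Bool) {u : ℕ} (hu : u ≤ 2*n+2) :
    Sfun x n u = fpart (restr n x) u := by
  unfold Sfun fpart
  apply Finset.sum_congr rfl
  intro i hi
  simp only [Finset.mem_range] at hi
  rw [vN_lt _ (by omega : i < 2*n+2)]
  rfl

lemma cond_iff (n : ℕ) (x : ℤ → Bool) :
    (∀ u ∈ Finset.Icc 1 (2*n+2), 1 ≤ Sfun x n u) ↔ Cond (restr n x) := by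
  unfold Cond
  constructor
  · intro h u hu
    rw [← Sfun_eq_fpart n x (by simp only [Finset.mem_Icc] at hu; omega)]
    exact h u hu
  · intro h u hu
    rw [Sfun_eq_fpart n x (by simp only [Finset.mem_Icc] at hu; omega)]
    exact h u hu

def Av (n : ℕ) (v : Fin (2*n+2) → Bool) : Set (ℤ → Bool) :=
  {x | ∀ i : Fin (2*n+2), x (-(n:ℤ) + i) = v i}

lemma mem_Av_iff (n : ℕ) (x : ℤ → Bool) (v : Fin (2*n+2) → Bool) :
    x ∈ Av n v ↔ restr n x = v := by
  constructor
  · intro h; funext i; exact h i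
  · intro h i; rw [← h]; rfl

lemma event_union (n : ℕ) :
    {x : ℤ → Bool | ∀ u ∈ Finset.Icc 1 (2*n+2), 1 ≤ Sfun x n u} =
      ⋃ v ∈ Finset.univ.filter (Cond (m := 2*n+2)), Av n v := by
  ext x
  simp only [Set.mem_setOf_eq, Set.mem_iUnion, Finset.mem_filter, Finset.mem_univ, true_and,
    mem_Av_iff]
  rw [cond_iff]
  constructor
  · intro h; exact ⟨restr n x, h, rfl⟩
  · rintro ⟨v, hv, rfl⟩; exact hv

lemma Av_measurable (n : ℕ) (v : Fin (2*n+2) → Bool) : MeasurableSet (Av n v) := by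
  have : Av n v = ⋂ i : Fin (2*n+2), (fun x : ℤ → Bool => x (-(n:ℤ) + i)) ⁻¹' {v i} := by
    ext x; simp [Av, Set.mem_iInter]
  rw [this]
  exact MeasurableSet.iInter fun i =>
    (measurable_pi_apply _) (MeasurableSet.singleton _)

lemma Av_disjoint (n : ℕ) :
    Set.PairwiseDisjoint ↑(Finset.univ.filter (Cond (m := 2*n+2))) (Av n) := by
  intro v _ w _ hvw
  simp only [Function.onFun]
  rw [Set.disjoint_left]
  intro x hx hx'
  rw [mem_Av_iff] at hx hx'
  exact hvw (hx ▸ hx')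

lemma measure_Av {p : ℝ} (hp0 : 0 ≤ p) (hp1 : p ≤ 1) {μ : Measure (ℤ → Bool)}
    (hber : IsBernoulli p μ) (n : ℕ) (v : Fin (2*n+2) → Bool) :
    μ (Av n v) = ENNReal.ofReal (Wr p v) := by
  set emb : ℕ ↪ ℤ := ⟨fun i => -(n:ℤ) + i, by intro a b h; simp only at h; omega⟩ with hemb
  set s : Finset ℤ := (Finset.range (2*n+2)).map emb with hs
  set f : ℤ → Bool := fun t => vN v (t + n).toNat with hf
  have hset : Av n v = {x | ∀ t ∈ s, x t = f t} := by
    ext x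
    simp only [Av, Set.mem_setOf_eq, hs, Finset.mem_map, Finset.mem_range]
    constructor
    · rintro h t ⟨i, hi, rfl⟩
      have e1 : ((emb i : ℤ) + n).toNat = i := by
        show ((-(n:ℤ) + (i:ℤ)) + n).toNat = i; omega
      rw [hf]
      simp only [e1]
      rw [vN_lt _ (by omega : i < 2*n+2)]
      exact h ⟨i, by omega⟩
    · intro h i
      have : x (emb i.val) = f (emb i.val) := h _ ⟨i.val, by omega, rfl⟩
      have e1 : ((emb i.val : ℤ) + n).toNat = i.val := by
        show ((-(n:ℤ) + (i.val:ℤ)) + n).toNat = i.val; omega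
      rw [hf] at this
      simp only [e1] at this
      rw [vN_lt _ i.isLt] at this
      exact this
  rw [hset, hber s f]
  rw [hs, Finset.prod_map]
  have step : ∀ i ∈ Finset.range (2*n+2),
      (if f (emb i) then ENNReal.ofReal p else ENNReal.ofReal (1-p))
        = ENNReal.ofReal (wt p (vN v i)) := by
    intro i hi
    have e1 : ((emb i : ℤ) + n).toNat = i := by
      show ((-(n:ℤ) + (i:ℤ)) + n).toNat = i; omega
    rw [hf]
    simp only [e1]
    cases vN v i <;> simp [wt]
  rw [Finset.prod_congr rfl step, ← ENNReal.ofReal_prod_of_nonneg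
    (fun i _ => wt_nonneg hp0 hp1 _)]
  congr 1
  rw [Wr, ← Fin.prod_univ_eq_prod_range (fun i => wt p (vN v i)) (2*n+2)]
  apply Finset.prod_congr rfl
  intro i _
  rw [vN_lt _ i.isLt]

lemma measure_event {p : ℝ} (hp0 : 0 ≤ p) (hp1 : p ≤ 1) {μ : Measure (ℤ → Bool)}
    (hber : IsBernoulli p μ) (n : ℕ) :
    μ {x : ℤ → Bool | ∀ u ∈ Finset.Icc 1 (2*n+2), 1 ≤ Sfun x n u}
      = ENNReal.ofReal (Pm p (2*n+2)) := by
  rw [event_union n, measure_biUnion_finset (Av_disjoint n) (fun v _ => Av_measurable n v)]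
  have : ∀ v ∈ Finset.univ.filter (Cond (m := 2*n+2)), μ (Av n v) = ENNReal.ofReal (Wr p v) :=
    fun v _ => measure_Av hp0 hp1 hber n v
  rw [Finset.sum_congr rfl this, ← ENNReal.ofReal_sum_of_nonneg
    (fun v _ => Wr_nonneg hp0 hp1 v)]
  congr 1
  rw [Pm, Finset.sum_filter]


end R184

/-- for ECA rule 184 started from the Bernoulli measure `μ_p`,
`lim_{n→∞} P_n(00) = 1 − 2p` if `p < 1/2`, and `lim_{n→∞} P_n(00) = 0` if `p ≥ 1/2`. -/
theorem rule184_prob_00_limit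
    (p : ℝ) (hp0 : 0 ≤ p) (hp1 : p ≤ 1)
    (μ : Measure (ℤ → Bool)) (hprob : IsProbabilityMeasure μ) (hber : IsBernoulli p μ) :
    (p < 1 / 2 →
      Tendsto (fun n : ℕ => (μ ((eca rule184)^[n] ⁻¹' cylinder [false, false])).toReal)
        atTop (nhds (1 - 2 * p))) ∧
    (1 / 2 ≤ p →
      Tendsto (fun n : ℕ => (μ ((eca rule184)^[n] ⁻¹' cylinder [false, false])).toReal)
        atTop (nhds 0)) := by
  have key : ∀ n : ℕ, (μ ((eca rule184)^[n] ⁻¹' cylinder [false, false])).toReal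
      = R184.Pm p (2*n+2) := by
    intro n
    rw [R184.event_eq n, R184.measure_event hp0 hp1 hber n,
      ENNReal.toReal_ofReal (R184.Pm_nonneg hp0 hp1 _)]
  constructor
  · intro hp
    have h := R184.Pm_tendsto_sub hp0 hp1 hp
    apply h.congr
    intro n
    exact (key n).symm
  · intro hp
    have h := R184.Pm_tendsto_crit hp0 hp1 hp
    apply h.congr
    intro n
    exact (key n).symm
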